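/- Let (X,S) be an association scheme, (Y,T) a 3-equivalenced association scheme, x₀ ∈ X and y₀ ∈ Y. For every t ∈ T ∖ {1_Y} and every central primitive idempotent e_ψ of the adjacency algebra A(S) = span{σ_s : s ∈ S} with e_ψ ≠ |X|^{-1} J_X (the trivial central primitive idempotent of A(S)), the Kronecker product e_ψ ⊗ ε_{y₀t} ∈ Mat_{X×Y}(ℂ) is a central primitive idempotent of the Terwilliger algebra T(S≀T) of the wreath product at (x₀,y₀). -/

import Mathlib

open Matrix BigOperators Kronecker
open scoped Classical

section Defs

variable {Z : Type*} [Fintype Z] [DecidableEq Z]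

/-- The identity (diagonal) relation on `Z`. -/
def diagRel (Z : Type*) [Fintype Z] [DecidableEq Z] : Finset (Z × Z) :=
  Finset.univ.filter fun p => p.1 = p.2

/-- The converse relation. -/
def convRel (s : Finset (Z × Z)) : Finset (Z × Z) := s.image fun p => (p.2, p.1)

/-- The intersection number `p_{st}^u`, computed at an arbitrary pair of `u`. -/
noncomputable def pNum (s t u : Finset (Z × Z)) : ℕ :=
  if h : u.Nonempty then
    (Finset.univ.filter fun z => (h.choose.1, z) ∈ s ∧ (z, h.choose.2) ∈ t).card
  else 0

/-- The valency `n_s = p_{s s*}^{1}`. -/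
noncomputable def valency (s : Finset (Z × Z)) : ℕ := pNum s (convRel s) (diagRel Z)

/-- The adjacency matrix of a relation. -/
def adjMat (s : Finset (Z × Z)) : Matrix Z Z ℂ :=
  Matrix.of fun x y => if (x, y) ∈ s then 1 else 0

/-- The diagonal 0/1 matrix of a subset. -/
def eps (U : Finset Z) : Matrix Z Z ℂ := Matrix.diagonal fun i => if i ∈ U then 1 else 0

/-- The all-ones matrix. -/
def allOnes (Z : Type*) : Matrix Z Z ℂ := Matrix.of fun _ _ => 1

/-- `pointFiber x s = xs = {y : (x,y) ∈ s}`. -/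
def pointFiber (x : Z) (s : Finset (Z × Z)) : Finset Z :=
  Finset.univ.filter fun y => (x, y) ∈ s

/-- An association scheme on a finite set `Z`: a partition of `Z × Z` into nonempty
relations containing the identity relation, closed under converse, and with
well-defined intersection numbers. -/
structure AssocScheme (Z : Type*) [Fintype Z] [DecidableEq Z] where
  rels : Finset (Finset (Z × Z))
  nonempty_mem : ∀ s ∈ rels, s.Nonempty
  cover : ∀ p : Z × Z, ∃ s ∈ rels, p ∈ s
  pairwise_disjoint : ∀ s ∈ rels, ∀ t ∈ rels, s ≠ t → Disjoint s t
  id_mem : diagRel Z ∈ rels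
  conv_mem : ∀ s ∈ rels, convRel s ∈ rels
  pconst : ∀ s ∈ rels, ∀ t ∈ rels, ∀ u ∈ rels, ∀ p ∈ u, ∀ q ∈ u,
    (Finset.univ.filter fun z => (p.1, z) ∈ s ∧ (z, p.2) ∈ t).card =
    (Finset.univ.filter fun z => (q.1, z) ∈ s ∧ (z, q.2) ∈ t).card

/-- A scheme is 3-equivalenced when it has more than one point and every
non-identity basic relation has valency 3. -/
def ThreeEquivalenced (B : AssocScheme Z) : Prop :=
  1 < Fintype.card Z ∧ ∀ t ∈ B.rels, t ≠ diagRel Z → valency t = 3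

/-- A scheme is k-equivalenced when it has more than one point and every
non-identity basic relation has valency k. -/
def KEquivalenced (B : AssocScheme Z) (k : ℕ) : Prop :=
  1 < Fintype.card Z ∧ ∀ t ∈ B.rels, t ≠ diagRel Z → valency t = k

/-- A scheme is imprimitive if some union of basic relations is an equivalence
relation different from the identity relation and from the full relation. -/
def Imprimitive (B : AssocScheme Z) : Prop :=
  ∃ R ⊆ B.rels, Equivalence (fun x y : Z => (x, y) ∈ R.sup id) ∧
    R.sup id ≠ diagRel Z ∧ R.sup id ≠ Finset.univ

/-- A coherent algebra: a subalgebra of the matrix algebra containing the all-ones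
matrix (and the identity), closed under conjugate transpose and Hadamard product. -/
def IsCoherent (𝒜 : Subalgebra ℂ (Matrix Z Z ℂ)) : Prop :=
  allOnes Z ∈ 𝒜 ∧ (∀ M ∈ 𝒜, Mᴴ ∈ 𝒜) ∧
  ∀ M ∈ 𝒜, ∀ N ∈ 𝒜, Matrix.hadamard M N ∈ 𝒜

/-- The one-point-extension algebra: the smallest coherent algebra containing all
adjacency matrices of the scheme and the diagonal matrix unit at `x`. -/
noncomputable def onePointAlg (B : AssocScheme Z) (x : Z) : Subalgebra ℂ (Matrix Z Z ℂ) :=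
  sInf {𝒜 | IsCoherent 𝒜 ∧ (∀ s ∈ B.rels, adjMat s ∈ 𝒜) ∧ eps {x} ∈ 𝒜}

/-- A matrix has only 0/1 entries. -/
def IsZeroOne (M : Matrix Z Z ℂ) : Prop := ∀ i j, M i j = 0 ∨ M i j = 1

/-- A basic relation matrix of a coherent algebra: a nonzero 0/1 matrix in the
algebra whose only 0/1 minorants in the algebra are 0 and itself. -/
def IsBasicMatrix (𝒜 : Subalgebra ℂ (Matrix Z Z ℂ)) (B : Matrix Z Z ℂ) : Prop :=
  B ∈ 𝒜 ∧ IsZeroOne B ∧ B ≠ 0 ∧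
  ∀ C ∈ 𝒜, IsZeroOne C → (∀ i j, C i j = 1 → B i j = 1) → C = 0 ∨ C = B

/-- The Terwilliger algebra of a scheme with respect to the base point `x`. -/
noncomputable def terwAlg (B : AssocScheme Z) (x : Z) : Subalgebra ℂ (Matrix Z Z ℂ) :=
  Algebra.adjoin ℂ
    ({M | ∃ s ∈ B.rels, M = adjMat s} ∪ {M | ∃ s ∈ B.rels, M = eps (pointFiber x s)})

/-- A central primitive idempotent of a (set underlying a) matrix algebra: a nonzero
central idempotent that is not the sum of two nonzero orthogonal central idempotents. -/
def IsCPI {n : Type*} [Fintype n] [DecidableEq n] (𝒜 : Set (Matrix n n ℂ))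
    (e : Matrix n n ℂ) : Prop :=
  e ∈ 𝒜 ∧ e ≠ 0 ∧ e * e = e ∧ (∀ a ∈ 𝒜, a * e = e * a) ∧
  ¬∃ f g : Matrix n n ℂ, f ∈ 𝒜 ∧ g ∈ 𝒜 ∧ f ≠ 0 ∧ g ≠ 0 ∧
    f * f = f ∧ g * g = g ∧ (∀ a ∈ 𝒜, a * f = f * a) ∧ (∀ a ∈ 𝒜, a * g = g * a) ∧
    f * g = 0 ∧ g * f = 0 ∧ e = f + g

/-- The trivial central primitive idempotent
`∑_{s∈S} n_s⁻¹ ε_{x s} J ε_{x s}` of the Terwilliger algebra. -/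
noncomputable def trivTerwIdem (B : AssocScheme Z) (x : Z) : Matrix Z Z ℂ :=
  ∑ s ∈ B.rels, ((valency s : ℂ)⁻¹) •
    (eps (pointFiber x s) * allOnes Z * eps (pointFiber x s))

/-- The adjacency algebra `A(S) = span{σ_s : s ∈ S}` as a set of matrices. -/
def adjAlgSet (B : AssocScheme Z) : Set (Matrix Z Z ℂ) :=
  ↑(Submodule.span ℂ {M | ∃ s ∈ B.rels, M = adjMat s})

end Defs

section Wreath

variable {X Y : Type*} [Fintype X] [DecidableEq X] [Fintype Y] [DecidableEq Y]

/-- Generators of the Terwilliger algebra of the wreath product at `(x₀, y₀)`. -/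
def wreathGens (A : AssocScheme X) (B : AssocScheme Y) (x₀ : X) (y₀ : Y) :
    Set (Matrix (X × Y) (X × Y) ℂ) :=
  {M | ∃ s ∈ A.rels, M = adjMat s ⊗ₖ (1 : Matrix Y Y ℂ)} ∪
  {M | ∃ s ∈ A.rels, M = eps (pointFiber x₀ s) ⊗ₖ eps ({y₀} : Finset Y)} ∪
  {M | ∃ t ∈ B.rels, t ≠ diagRel Y ∧ M = allOnes X ⊗ₖ adjMat t} ∪
  {M | ∃ t ∈ B.rels, t ≠ diagRel Y ∧ M = (1 : Matrix X X ℂ) ⊗ₖ eps (pointFiber y₀ t)}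

/-- The Terwilliger algebra of the wreath product at `(x₀, y₀)`. -/
noncomputable def wreathTerw (A : AssocScheme X) (B : AssocScheme Y) (x₀ : X) (y₀ : Y) :
    Subalgebra ℂ (Matrix (X × Y) (X × Y) ℂ) :=
  Algebra.adjoin ℂ (wreathGens A B x₀ y₀)

/-- The relation `s̃` of the wreath product coming from `s ∈ S`. -/
def tildeRel (s : Finset (X × X)) : Finset ((X × Y) × (X × Y)) :=
  Finset.univ.filter fun p => (p.1.1, p.2.1) ∈ s ∧ p.1.2 = p.2.2

/-- The relation `t̄` of the wreath product coming from `t ∈ T \ {1}`. -/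
def barRel (t : Finset (Y × Y)) : Finset ((X × Y) × (X × Y)) :=
  Finset.univ.filter fun p => (p.1.2, p.2.2) ∈ t

/-- The basic relations of the wreath product `S ≀ T`. -/
def wreathRels (A : AssocScheme X) (B : AssocScheme Y) :
    Finset (Finset ((X × Y) × (X × Y))) :=
  A.rels.image (tildeRel (Y := Y)) ∪ (B.rels.erase (diagRel Y)).image (barRel (X := X))

/-- The trivial central primitive idempotent
`e₀ = ∑_u n_u⁻¹ ε_{(x₀,y₀)u} J ε_{(x₀,y₀)u}` of `T(S ≀ T)`. -/
noncomputable def wreathTriv (A : AssocScheme X) (B : AssocScheme Y) (x₀ : X) (y₀ : Y) :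
    Matrix (X × Y) (X × Y) ℂ :=
  ∑ u ∈ wreathRels A B, ((valency u : ℂ)⁻¹) •
    (eps (pointFiber (x₀, y₀) u) * allOnes (X × Y) * eps (pointFiber (x₀, y₀) u))

/-- `ω = e^{2πi/3}`. -/
noncomputable def omega3 : ℂ := Complex.exp (2 * Real.pi * Complex.I / 3)

/-- The shifted matching matrix `∑_i E_{y_{t(i)}, y_{t'(i+k)}}` on `y₀t × y₀t'`. -/
noncomputable def cyc (enum : Finset (Y × Y) → Fin 3 → Y) (t t' : Finset (Y × Y))
    (k : Fin 3) : Matrix Y Y ℂ :=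
  ∑ i : Fin 3, Matrix.single (enum t i) (enum t' (i + k)) 1

/-- `G_{y₀t, y₀t'}`. -/
noncomputable def Gmat (X : Type*) [Fintype X] (enum : Finset (Y × Y) → Fin 3 → Y)
    (t t' : Finset (Y × Y)) : Matrix (X × Y) (X × Y) ℂ :=
  ((3 * (Fintype.card X : ℂ))⁻¹) •
    (allOnes X ⊗ₖ (cyc enum t t' 0 + omega3 • cyc enum t t' 1 + omega3 ^ 2 • cyc enum t t' 2))

/-- `G'_{y₀t, y₀t'}`. -/
noncomputable def Gmat' (X : Type*) [Fintype X] (enum : Finset (Y × Y) → Fin 3 → Y)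
    (t t' : Finset (Y × Y)) : Matrix (X × Y) (X × Y) ℂ :=
  ((3 * (Fintype.card X : ℂ))⁻¹) •
    (allOnes X ⊗ₖ (cyc enum t t' 0 + omega3 ^ 2 • cyc enum t t' 1 + omega3 • cyc enum t t' 2))

/-- `enum` enumerates each set `y₀t` (for non-identity `t`) by `Fin 3`. -/
def IsEnum (B : AssocScheme Y) (y₀ : Y) (enum : Finset (Y × Y) → Fin 3 → Y) : Prop :=
  ∀ t ∈ B.rels, t ≠ diagRel Y →
    Function.Injective (enum t) ∧ ∀ y, y ∈ pointFiber y₀ t ↔ ∃ i, enum t i = y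

/-- The enumerations are well-ordering: every basic relation matrix of the
one-point-extension algebra which is nonzero on `y₀t × y₀t'` restricts there to one of
the cyclic permutation matrices `I, C, C²`. -/
def IsWellOrdering (B : AssocScheme Y) (y₀ : Y) (enum : Finset (Y × Y) → Fin 3 → Y) : Prop :=
  IsEnum B y₀ enum ∧
  ∀ t ∈ B.rels, t ≠ diagRel Y → ∀ t' ∈ B.rels, t' ≠ diagRel Y →
    ∀ M : Matrix Y Y ℂ, IsBasicMatrix (onePointAlg B y₀) M →
      (∃ i j : Fin 3, M (enum t i) (enum t' j) ≠ 0) →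
      ∃ k : Fin 3, ∀ i j : Fin 3,
        M (enum t i) (enum t' j) = if j = i + k then 1 else 0

/-- The set of all matrices `G_{y₀t, y₀t'}`, `t, t' ∈ T₃`. -/
noncomputable def GmatSet (X : Type*) [Fintype X] (B : AssocScheme Y)
    (enum : Finset (Y × Y) → Fin 3 → Y) : Set (Matrix (X × Y) (X × Y) ℂ) :=
  {M | ∃ t ∈ B.rels.erase (diagRel Y), ∃ t' ∈ B.rels.erase (diagRel Y), M = Gmat X enum t t'}

/-- The set of all matrices `G'_{y₀t, y₀t'}`, `t, t' ∈ T₃`. -/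
noncomputable def GmatSet' (X : Type*) [Fintype X] (B : AssocScheme Y)
    (enum : Finset (Y × Y) → Fin 3 → Y) : Set (Matrix (X × Y) (X × Y) ℂ) :=
  {M | ∃ t ∈ B.rels.erase (diagRel Y), ∃ t' ∈ B.rels.erase (diagRel Y), M = Gmat' X enum t t'}

/-- `e_{η1} = ∑_{t ∈ T₃} G_{y₀t, y₀t}`. -/
noncomputable def etaOne (X : Type*) [Fintype X] (B : AssocScheme Y)
    (enum : Finset (Y × Y) → Fin 3 → Y) : Matrix (X × Y) (X × Y) ℂ :=
  ∑ t ∈ B.rels.erase (diagRel Y), Gmat X enum t t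

/-- `e_{η2} = ∑_{t ∈ T₃} G'_{y₀t, y₀t}`. -/
noncomputable def etaTwo (X : Type*) [Fintype X] (B : AssocScheme Y)
    (enum : Finset (Y × Y) → Fin 3 → Y) : Matrix (X × Y) (X × Y) ℂ :=
  ∑ t ∈ B.rels.erase (diagRel Y), Gmat' X enum t t

end Wreath


section HelperLemmas
set_option linter.unusedSectionVars false

variable {Z : Type*} [Fintype Z] [DecidableEq Z]

lemma mem_diagRel {a b : Z} : (a, b) ∈ diagRel Z ↔ a = b := by simp [diagRel]

lemma mem_convRel {s : Finset (Z × Z)} {a b : Z} : (a, b) ∈ convRel s ↔ (b, a) ∈ s := by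
  constructor
  · rintro h
    obtain ⟨⟨u, v⟩, hp, hh⟩ := Finset.mem_image.mp h
    obtain ⟨h1, h2⟩ := Prod.mk.injEq .. ▸ hh
    simp only at h1 h2
    subst h1; subst h2; exact hp
  · intro h
    exact Finset.mem_image.mpr ⟨(b, a), h, rfl⟩

lemma rel_unique (B : AssocScheme Z) {s u : Finset (Z × Z)} (hs : s ∈ B.rels)
    (hu : u ∈ B.rels) {p : Z × Z} (hps : p ∈ s) (hpu : p ∈ u) : s = u := by
  by_contra hne
  exact (Finset.disjoint_left.mp (B.pairwise_disjoint s hs u hu hne) hps) hpu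

noncomputable def spanS (B : AssocScheme Z) : Submodule ℂ (Matrix Z Z ℂ) :=
  Submodule.span ℂ {M | ∃ s ∈ B.rels, M = adjMat s}

lemma adjMat_mem_spanS (B : AssocScheme Z) {s} (hs : s ∈ B.rels) : adjMat s ∈ spanS B :=
  Submodule.subset_span ⟨s, hs, rfl⟩

lemma adjMat_apply (s : Finset (Z × Z)) (x y : Z) :
    adjMat s x y = if (x, y) ∈ s then 1 else 0 := rfl

lemma mul_adjMat_apply (s t : Finset (Z × Z)) (x y : Z) :
    (adjMat s * adjMat t) x y =
      ((Finset.univ.filter fun z => (x, z) ∈ s ∧ (z, y) ∈ t).card : ℂ) := by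
  rw [Matrix.mul_apply, ← Finset.sum_boole]
  refine Finset.sum_congr rfl fun z _ => ?_
  rw [adjMat_apply, adjMat_apply]
  split_ifs with h1 h2 h3 <;> simp_all

lemma pNum_eq (B : AssocScheme Z) {s t u : Finset (Z × Z)} (hs : s ∈ B.rels)
    (ht : t ∈ B.rels) (hu : u ∈ B.rels) {p : Z × Z} (hp : p ∈ u) :
    (pNum s t u : ℕ) = (Finset.univ.filter fun z => (p.1, z) ∈ s ∧ (z, p.2) ∈ t).card := by
  have hne : u.Nonempty := ⟨p, hp⟩
  rw [pNum, dif_pos hne]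
  exact B.pconst s hs t ht u hu _ hne.choose_spec p hp

lemma adj_mul_adj (B : AssocScheme Z) {s t : Finset (Z × Z)} (hs : s ∈ B.rels)
    (ht : t ∈ B.rels) :
    adjMat s * adjMat t = ∑ u ∈ B.rels, (pNum s t u : ℂ) • adjMat u := by
  ext x y
  obtain ⟨u₀, hu₀, hp⟩ := B.cover (x, y)
  rw [mul_adjMat_apply, Matrix.sum_apply]
  have hz : ∀ u ∈ B.rels, u ≠ u₀ → ((pNum s t u : ℂ) • adjMat u) x y = 0 := by
    intro u hu hne
    have : (x, y) ∉ u := fun hin => hne (rel_unique B hu hu₀ hin hp)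
    simp [adjMat_apply, this]
  rw [Finset.sum_eq_single u₀ hz (fun h => absurd hu₀ h)]
  simp [adjMat_apply, hp, pNum_eq B hs ht hu₀ hp]

lemma spanS_mul (B : AssocScheme Z) {a b : Matrix Z Z ℂ} (ha : a ∈ spanS B)
    (hb : b ∈ spanS B) : a * b ∈ spanS B := by
  induction ha using Submodule.span_induction with
  | mem x hx =>
    obtain ⟨s, hs, rfl⟩ := hx
    induction hb using Submodule.span_induction with
    | mem y hy =>
      obtain ⟨u, hu, rfl⟩ := hy
      rw [adj_mul_adj B hs hu]
      exact Submodule.sum_mem _ fun u' hu' =>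
        Submodule.smul_mem _ _ (adjMat_mem_spanS B hu')
    | zero => rw [mul_zero]; exact zero_mem _
    | add y z _ _ hy hz => rw [mul_add]; exact add_mem hy hz
    | smul c y _ hy => rw [mul_smul_comm]; exact Submodule.smul_mem _ _ hy
  | zero => rw [zero_mul]; exact zero_mem _
  | add x y _ _ hx hy => rw [add_mul]; exact add_mem hx hy
  | smul c x _ hx => rw [smul_mul_assoc]; exact Submodule.smul_mem _ _ hx

lemma sum_adjMat (B : AssocScheme Z) : ∑ s ∈ B.rels, adjMat s = allOnes Z := by
  ext x y
  obtain ⟨u₀, hu₀, hp⟩ := B.cover (x, y)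
  rw [Matrix.sum_apply]
  have hz : ∀ u ∈ B.rels, u ≠ u₀ → adjMat u x y = 0 := by
    intro u hu hne
    have : (x, y) ∉ u := fun hin => hne (rel_unique B hu hu₀ hin hp)
    simp [adjMat_apply, this]
  rw [Finset.sum_eq_single u₀ hz (fun h => absurd hu₀ h)]
  simp [adjMat_apply, hp, allOnes]

lemma adjMat_diagRel : adjMat (diagRel Z) = (1 : Matrix Z Z ℂ) := by
  ext x y
  rw [adjMat_apply, Matrix.one_apply]
  simp [mem_diagRel]

lemma one_mem_spanS (B : AssocScheme Z) : (1 : Matrix Z Z ℂ) ∈ spanS B := by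
  rw [← adjMat_diagRel]; exact adjMat_mem_spanS B B.id_mem

lemma allOnes_mem_spanS (B : AssocScheme Z) : allOnes Z ∈ spanS B := by
  rw [← sum_adjMat B]
  exact Submodule.sum_mem _ fun s hs => adjMat_mem_spanS B hs

lemma adjMat_conjT (s : Finset (Z × Z)) : (adjMat s)ᴴ = adjMat (convRel s) := by
  ext x y
  rw [Matrix.conjTranspose_apply, adjMat_apply, adjMat_apply]
  by_cases h : (y, x) ∈ s
  · rw [if_pos h, if_pos (mem_convRel.mpr h)]; simp
  · rw [if_neg h, if_neg (fun hc => h (mem_convRel.mp hc))]; simp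

lemma spanS_conjT (B : AssocScheme Z) {a : Matrix Z Z ℂ} (ha : a ∈ spanS B) :
    aᴴ ∈ spanS B := by
  induction ha using Submodule.span_induction with
  | mem x hx =>
    obtain ⟨s, hs, rfl⟩ := hx
    rw [adjMat_conjT]
    exact adjMat_mem_spanS B (B.conv_mem s hs)
  | zero => rw [conjTranspose_zero]; exact zero_mem _
  | add x y _ _ hx hy => rw [conjTranspose_add]; exact add_mem hx hy
  | smul c x _ hx => rw [conjTranspose_smul]; exact Submodule.smul_mem _ _ hx

lemma rowcard_const (B : AssocScheme Z) {s : Finset (Z × Z)} (hs : s ∈ B.rels) (x x' : Z) :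
    (Finset.univ.filter fun z => (x, z) ∈ s).card =
    (Finset.univ.filter fun z => (x', z) ∈ s).card := by
  have key := B.pconst s hs (convRel s) (B.conv_mem s hs) (diagRel Z) B.id_mem
    (x, x) (mem_diagRel.mpr rfl) (x', x') (mem_diagRel.mpr rfl)
  have e1 : ∀ w : Z, (Finset.univ.filter fun z => (w, z) ∈ s ∧ (z, w) ∈ convRel s) =
      (Finset.univ.filter fun z => (w, z) ∈ s) := by
    intro w
    apply Finset.filter_congr
    intro z _
    rw [mem_convRel]
    exact and_self_iff
  rw [e1, e1] at key
  exact key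

lemma colcard_const (B : AssocScheme Z) {s : Finset (Z × Z)} (hs : s ∈ B.rels) (y y' : Z) :
    (Finset.univ.filter fun z => (z, y) ∈ s).card =
    (Finset.univ.filter fun z => (z, y') ∈ s).card := by
  have key := B.pconst (convRel s) (B.conv_mem s hs) s hs (diagRel Z) B.id_mem
    (y, y) (mem_diagRel.mpr rfl) (y', y') (mem_diagRel.mpr rfl)
  have e1 : ∀ w : Z, (Finset.univ.filter fun z => (w, z) ∈ convRel s ∧ (z, w) ∈ s) =
      (Finset.univ.filter fun z => (z, w) ∈ s) := by
    intro w
    apply Finset.filter_congr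
    intro z _
    rw [mem_convRel]
    exact and_self_iff
  rw [e1, e1] at key
  exact key

lemma adjMat_allOnes_comm (B : AssocScheme Z) [Nonempty Z] {s : Finset (Z × Z)}
    (hs : s ∈ B.rels) : adjMat s * allOnes Z = allOnes Z * adjMat s := by
  obtain ⟨z₀⟩ := ‹Nonempty Z›
  set R : ℕ := (Finset.univ.filter fun z => (z₀, z) ∈ s).card with hR
  set C : ℕ := (Finset.univ.filter fun z => (z, z₀) ∈ s).card with hC
  have hrow : ∀ x : Z, (∑ z : Z, adjMat s x z) = (R : ℂ) := by
    intro x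
    simp only [adjMat_apply]
    rw [Finset.sum_boole]
    rw [hR]; exact_mod_cast congrArg (Nat.cast : ℕ → ℂ) (rowcard_const B hs x z₀)
  have hcol : ∀ y : Z, (∑ z : Z, adjMat s z y) = (C : ℂ) := by
    intro y
    simp only [adjMat_apply]
    rw [Finset.sum_boole]
    rw [hC]; exact_mod_cast congrArg (Nat.cast : ℕ → ℂ) (colcard_const B hs y z₀)
  have hRC : (R : ℂ) = (C : ℂ) := by
    have h1 : (∑ x : Z, ∑ z : Z, adjMat s x z) = (Fintype.card Z : ℂ) * R := by
      simp [hrow, Finset.sum_const, nsmul_eq_mul]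
    have h2 : (∑ z : Z, ∑ x : Z, adjMat s x z) = (Fintype.card Z : ℂ) * C := by
      simp [hcol, Finset.sum_const, nsmul_eq_mul]
    have h3 := Finset.sum_comm (s := Finset.univ) (t := Finset.univ)
      (f := fun x z => adjMat s x z)
    rw [h1] at h3
    rw [h2] at h3
    exact mul_left_cancel₀ (Nat.cast_ne_zero.mpr Fintype.card_ne_zero) h3
  ext x y
  rw [Matrix.mul_apply, Matrix.mul_apply]
  simp only [allOnes, Matrix.of_apply, mul_one, one_mul]
  rw [hrow x, hcol y, hRC]

lemma spanS_allOnes_comm (B : AssocScheme Z) [Nonempty Z] {a : Matrix Z Z ℂ}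
    (ha : a ∈ spanS B) : a * allOnes Z = allOnes Z * a := by
  induction ha using Submodule.span_induction with
  | mem x hx => obtain ⟨s, hs, rfl⟩ := hx; exact adjMat_allOnes_comm B hs
  | zero => rw [zero_mul, mul_zero]
  | add x y _ _ hx hy => rw [add_mul, mul_add, hx, hy]
  | smul c x _ hx => rw [smul_mul_assoc, mul_smul_comm, hx]

lemma eps_mul_eps (U V : Finset Z) : eps U * eps V = eps (U ∩ V) := by
  rw [eps, eps, eps, Matrix.diagonal_mul_diagonal]
  refine congrArg Matrix.diagonal (funext fun i => ?_)
  by_cases hU : i ∈ U <;> by_cases hV : i ∈ V <;> simp [hU, hV]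

lemma eps_empty : eps (∅ : Finset Z) = 0 := by
  rw [eps]; simp

lemma fiber_card (B : AssocScheme Z) [Nonempty Z] {t : Finset (Z × Z)}
    (ht : t ∈ B.rels) (y : Z) : (pointFiber y t).card = valency t := by
  have hdne : (diagRel Z).Nonempty :=
    ⟨(Classical.arbitrary Z, Classical.arbitrary Z), mem_diagRel.mpr rfl⟩
  rw [valency, pNum, dif_pos hdne]
  have key := B.pconst t ht (convRel t) (B.conv_mem t ht) (diagRel Z) B.id_mem
    hdne.choose hdne.choose_spec (y, y) (mem_diagRel.mpr rfl)
  rw [key]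
  congr 1
  apply Finset.filter_congr
  intro z _
  rw [mem_convRel]
  exact (and_self_iff).symm

lemma matrix_eq_zero_of_mul_conjT (M : Matrix Z Z ℂ) (h : M * Mᴴ = 0) : M = 0 := by
  ext i j
  have h1 : (M * Mᴴ) i i = 0 := by rw [h]; rfl
  rw [Matrix.mul_apply] at h1
  have h2 : (∑ k, (Complex.normSq (M i k) : ℂ)) = 0 := by
    rw [← h1]
    refine Finset.sum_congr rfl fun k _ => ?_
    rw [Matrix.conjTranspose_apply]
    simp [Complex.mul_conj]
  have h3 : (∑ k, Complex.normSq (M i k)) = 0 := by exact_mod_cast h2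
  have h4 := (Finset.sum_eq_zero_iff_of_nonneg
    (fun k _ => Complex.normSq_nonneg (M i k))).mp h3 j (Finset.mem_univ j)
  simpa using Complex.normSq_eq_zero.mp h4

lemma cpi_herm (B : AssocScheme Z) {e : Matrix Z Z ℂ}
    (he : IsCPI (adjAlgSet B) e) : eᴴ = e := by
  obtain ⟨hmem', hne0, hidem, hcomm', hprim⟩ := he
  have hmem : e ∈ spanS B := hmem'
  have hcomm : ∀ a ∈ spanS B, a * e = e * a := hcomm'
  have hH : eᴴ ∈ spanS B := spanS_conjT B hmem
  have hHcomm : ∀ a ∈ spanS B, a * eᴴ = eᴴ * a := by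
    intro a ha
    have h1 : aᴴ * e = e * aᴴ := hcomm aᴴ (spanS_conjT B ha)
    calc a * eᴴ = (e * aᴴ)ᴴ := by
          rw [conjTranspose_mul, conjTranspose_conjTranspose]
      _ = (aᴴ * e)ᴴ := by rw [h1]
      _ = eᴴ * a := by rw [conjTranspose_mul, conjTranspose_conjTranspose]
  have hcomm_eH : eᴴ * e = e * eᴴ := (hHcomm e hmem).symm
  have hHidem : eᴴ * eᴴ = eᴴ := by rw [← conjTranspose_mul, hidem]
  set p := e * eᴴ with hp
  have hp2 : p * p = p := by
    rw [hp]
    calc e * eᴴ * (e * eᴴ) = e * (eᴴ * e) * eᴴ := by rw [mul_assoc, mul_assoc, mul_assoc]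
      _ = e * (e * eᴴ) * eᴴ := by rw [hcomm_eH]
      _ = (e * e) * (eᴴ * eᴴ) := by rw [mul_assoc, mul_assoc, mul_assoc]
      _ = e * eᴴ := by rw [hidem, hHidem]
  have hpmem : p ∈ spanS B := spanS_mul B hmem hH
  have hpcomm : ∀ a ∈ spanS B, a * p = p * a := by
    intro a ha
    rw [hp, ← mul_assoc, hcomm a ha, mul_assoc, hHcomm a ha, ← mul_assoc]
  have hp0 : p ≠ 0 := fun h => hne0 (matrix_eq_zero_of_mul_conjT e h)
  have hep : e * p = p := by rw [hp, ← mul_assoc, hidem]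
  have hpe : p * e = p := by
    rw [hp, mul_assoc, hcomm_eH, ← mul_assoc, hidem]
  have hq : e = p := by
    by_contra hq0
    refine hprim ⟨p, e - p, hpmem, sub_mem hmem hpmem, hp0,
      fun h => hq0 (by rw [← sub_eq_zero]; exact h), hp2, ?_, hpcomm, ?_, ?_, ?_, ?_⟩
    · rw [mul_sub, sub_mul, sub_mul, hidem, hep, hpe, hp2]
      abel
    · intro a ha
      rw [mul_sub, sub_mul, hcomm a ha, hpcomm a ha]
    · rw [mul_sub, hpe, hp2, sub_self]
    · rw [sub_mul, hep, hp2, sub_self]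
    · rw [add_sub_cancel]
  rw [hq, hp, conjTranspose_mul, conjTranspose_conjTranspose]

lemma cpi_J (B : AssocScheme Z) [Nonempty Z] {e : Matrix Z Z ℂ}
    (he : IsCPI (adjAlgSet B) e)
    (hne : e ≠ ((Fintype.card Z : ℂ)⁻¹) • allOnes Z) :
    e * allOnes Z = 0 ∧ allOnes Z * e = 0 := by
  have hH : eᴴ = e := cpi_herm B he
  obtain ⟨hmem', hne0, hidem, hcomm', hprim⟩ := he
  have hmem : e ∈ spanS B := hmem'
  have hcomm : ∀ a ∈ spanS B, a * e = e * a := hcomm'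
  have hJmem : allOnes Z ∈ spanS B := allOnes_mem_spanS B
  have hJe : allOnes Z * e = e * allOnes Z := hcomm _ hJmem
  by_cases h0 : e * allOnes Z = 0
  · exact ⟨h0, hJe.trans h0⟩
  exfalso
  set r : Z → ℂ := fun x => ∑ z, e x z with hr
  have hEJ : ∀ x y, (e * allOnes Z) x y = r x := by
    intro x y; rw [Matrix.mul_apply]; simp [allOnes, hr]
  have hstar : ∀ y z : Z, e z y = star (e y z) := by
    intro y z
    conv_lhs => rw [← hH]
    rw [Matrix.conjTranspose_apply]
  have hcol : ∀ y, (∑ z, e z y) = star (r y) := by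
    intro y
    rw [hr]
    simp only []
    rw [star_sum]
    exact Finset.sum_congr rfl fun z _ => hstar y z
  have hJE : ∀ x y, (allOnes Z * e) x y = star (r y) := by
    intro x y
    rw [Matrix.mul_apply]
    simp only [allOnes, Matrix.of_apply, one_mul]
    exact hcol y
  obtain ⟨x1, hx1⟩ : ∃ x, r x ≠ 0 := by
    by_contra hall
    push_neg at hall
    exact h0 (by ext x y; rw [hEJ x y, hall x]; rfl)
  set s0 : ℂ := ∑ x, r x with hs0
  have hs0val : s0 = ∑ z, star (r z) * r z := by
    have step1 : ∑ z, star (r z) * r z = ∑ z, (∑ x, e x z) * (∑ y, e z y) := by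
      refine Finset.sum_congr rfl fun z _ => ?_
      rw [hcol z]
    have step2 : ∑ z, (∑ x : Z, e x z) * (∑ y, e z y) =
        ∑ z, ∑ x, ∑ y, e x z * e z y := by
      refine Finset.sum_congr rfl fun z _ => ?_
      rw [Finset.sum_mul]
      refine Finset.sum_congr rfl fun x _ => ?_
      rw [Finset.mul_sum]
    have step3 : (∑ z, ∑ x, ∑ y, e x z * e z y : ℂ) =
        ∑ x, ∑ z, ∑ y, e x z * e z y := Finset.sum_comm
    have step4 : (∑ x, ∑ z, ∑ y, e x z * e z y : ℂ) =
        ∑ x, ∑ y, ∑ z, e x z * e z y :=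
      Finset.sum_congr rfl fun x _ => Finset.sum_comm
    have step5 : (∑ x : Z, ∑ y, ∑ z, e x z * e z y : ℂ) = ∑ x, ∑ y, e x y := by
      refine Finset.sum_congr rfl fun x _ => Finset.sum_congr rfl fun y _ => ?_
      rw [← Matrix.mul_apply, hidem]
    rw [step1, step2, step3, step4, step5, hs0]
  have hs0ne : s0 ≠ 0 := by
    rw [hs0val]
    have heq : (∑ z, star (r z) * r z : ℂ) = ((∑ z, Complex.normSq (r z) : ℝ) : ℂ) := by
      push_cast
      refine Finset.sum_congr rfl fun z _ => ?_
      rw [mul_comm]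
      simp [Complex.mul_conj]
    rw [heq]
    have hpos : 0 < ∑ z, Complex.normSq (r z) :=
      Finset.sum_pos' (fun z _ => Complex.normSq_nonneg _)
        ⟨x1, Finset.mem_univ x1, Complex.normSq_pos.mpr hx1⟩
    exact_mod_cast ne_of_gt hpos
  have hJeJ : allOnes Z * (e * allOnes Z) = s0 • allOnes Z := by
    ext x y
    rw [Matrix.mul_apply]
    simp only [allOnes, Matrix.of_apply, one_mul, Matrix.smul_apply, smul_eq_mul, mul_one]
    rw [hs0]
    exact Finset.sum_congr rfl fun z _ => hEJ z y
  set f := s0⁻¹ • (e * allOnes Z * e) with hf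
  have hfmem : f ∈ spanS B :=
    Submodule.smul_mem _ _ (spanS_mul B (spanS_mul B hmem hJmem) hmem)
  have hfcomm : ∀ a ∈ spanS B, a * f = f * a := by
    intro a ha
    rw [hf, mul_smul_comm, smul_mul_assoc]
    congr 1
    have h1 : a * e = e * a := hcomm a ha
    have h2 : a * allOnes Z = allOnes Z * a := spanS_allOnes_comm B ha
    calc a * (e * allOnes Z * e) = a * e * allOnes Z * e := by
          rw [← mul_assoc, ← mul_assoc]
      _ = e * (a * allOnes Z) * e := by rw [h1, mul_assoc e a]
      _ = e * allOnes Z * a * e := by rw [h2, ← mul_assoc]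
      _ = e * allOnes Z * (e * a) := by rw [mul_assoc, h1]
      _ = e * allOnes Z * e * a := by rw [← mul_assoc]
  have hkey : (e * allOnes Z * e) * (e * allOnes Z * e) = s0 • (e * allOnes Z * e) := by
    calc (e * allOnes Z * e) * (e * allOnes Z * e)
        = e * allOnes Z * ((e * e) * (allOnes Z * e)) := by
          simp only [mul_assoc]
      _ = e * (allOnes Z * (e * allOnes Z)) * e := by
          rw [hidem]; simp only [mul_assoc]
      _ = e * (s0 • allOnes Z) * e := by rw [hJeJ]
      _ = s0 • (e * allOnes Z * e) := by
          rw [mul_smul_comm, smul_mul_assoc]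
  have hfidem : f * f = f := by
    rw [hf, smul_mul_assoc, mul_smul_comm, smul_smul, hkey, smul_smul]
    congr 1
    field_simp
  have hef1 : e * f = f := by
    rw [hf, mul_smul_comm]
    congr 1
    rw [← mul_assoc, ← mul_assoc, hidem]
  have hfe1 : f * e = f := by
    rw [hf, smul_mul_assoc]
    congr 1
    rw [mul_assoc, hidem]
  have hfne : f ≠ 0 := by
    intro hf0
    apply h0
    have hcomp : f * allOnes Z = e * allOnes Z := by
      rw [hf, smul_mul_assoc]
      have : e * allOnes Z * e * allOnes Z = e * (allOnes Z * (e * allOnes Z)) := by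
        simp only [mul_assoc]
      rw [this, hJeJ, mul_smul_comm, smul_smul, inv_mul_cancel₀ hs0ne, one_smul]
    rw [hf0, zero_mul] at hcomp
    exact hcomp.symm
  by_cases hg : e - f = 0
  · -- e = f, derive e = n⁻¹ • J, contradiction with hne
    have hef : e = f := by rwa [sub_eq_zero] at hg
    have hconst : ∀ x y : Z, star (r y) = r x := by
      intro x y
      have hxy := congrFun (congrFun hJe x) y
      rw [hJE x y, hEJ x y] at hxy
      exact hxy
    set lam := r x1 with hlam
    have hrconst : ∀ x, r x = lam := by
      intro x
      have h1 := hconst x x1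
      have h2 := hconst x1 x1
      rw [← h1, h2]
    have hEJlam : e * allOnes Z = lam • allOnes Z := by
      ext x y
      rw [hEJ x y, hrconst x]
      simp [allOnes]
    have hs0lam : s0 = (Fintype.card Z : ℂ) * lam := by
      rw [hs0]
      simp [hrconst, Finset.sum_const, nsmul_eq_mul]
    have hcardne : (Fintype.card Z : ℂ) ≠ 0 :=
      Nat.cast_ne_zero.mpr Fintype.card_ne_zero
    have hlamne : lam ≠ 0 := by
      intro h
      exact hs0ne (by rw [hs0lam, h, mul_zero])
    have hJelam : allOnes Z * e = lam • allOnes Z := by rw [hJe, hEJlam]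
    have heJe : e * allOnes Z * e = (lam * lam) • allOnes Z := by
      rw [hEJlam, smul_mul_assoc, hJelam, smul_smul]
    have hefin : e = (lam * (Fintype.card Z : ℂ)⁻¹) • allOnes Z := by
      rw [hef, hf, heJe, smul_smul, hs0lam]
      congr 1
      field_simp
    have hJJ : allOnes Z * allOnes Z = (Fintype.card Z : ℂ) • allOnes Z := by
      ext x y
      rw [Matrix.mul_apply]
      simp [allOnes, Finset.sum_const, nsmul_eq_mul]
    set mu := lam * (Fintype.card Z : ℂ)⁻¹ with hmu
    have hmune : mu ≠ 0 := mul_ne_zero hlamne (inv_ne_zero hcardne)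
    have h2 := hidem
    rw [hefin, smul_mul_assoc, mul_smul_comm, hJJ, smul_smul, smul_smul] at h2
    obtain ⟨z₀⟩ := ‹Nonempty Z›
    have h3 := congrFun (congrFun h2 z₀) z₀
    simp only [Matrix.smul_apply, allOnes, Matrix.of_apply, smul_eq_mul, mul_one] at h3
    have h4 : mu * (mu * (Fintype.card Z : ℂ)) = mu * 1 := by
      rw [mul_one, ← mul_assoc]; exact h3
    have h5 : mu * (Fintype.card Z : ℂ) = 1 := mul_left_cancel₀ hmune h4
    have h6 : mu = (Fintype.card Z : ℂ)⁻¹ := eq_inv_of_mul_eq_one_left h5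
    exact hne (by rw [hefin, h6])
  · refine hprim ⟨f, e - f, hfmem, sub_mem hmem hfmem, hfne, hg, hfidem, ?_, hfcomm, ?_, ?_, ?_, ?_⟩
    · rw [mul_sub, sub_mul, sub_mul, hidem, hef1, hfe1, hfidem]
      abel
    · intro a ha
      rw [mul_sub, sub_mul, hcomm a ha, hfcomm a ha]
    · rw [mul_sub, hfe1, hfidem, sub_self]
    · rw [sub_mul, hef1, hfidem, sub_self]
    · rw [add_sub_cancel]
end HelperLemmas

section Statements

variable {X Y : Type*} [Fintype X] [DecidableEq X] [Fintype Y] [DecidableEq Y]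

theorem stmt10 (A : AssocScheme X) (B : AssocScheme Y) (h3 : ThreeEquivalenced B)
    (x₀ : X) (y₀ : Y) (t : Finset (Y × Y)) (ht : t ∈ B.rels) (ht1 : t ≠ diagRel Y)
    (e : Matrix X X ℂ) (he : IsCPI (adjAlgSet A) e)
    (hne : e ≠ ((Fintype.card X : ℂ)⁻¹) • allOnes X) :
    IsCPI (wreathTerw A B x₀ y₀ : Set (Matrix (X × Y) (X × Y) ℂ))
      (e ⊗ₖ eps (pointFiber y₀ t)) := by
  classical
  have hXne : Nonempty X := ⟨x₀⟩
  have hYne : Nonempty Y := ⟨y₀⟩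
  obtain ⟨heJ, hJe⟩ := cpi_J A he hne
  obtain ⟨hemem', hene, heid, hecomm', heprim⟩ := he
  have hemem : e ∈ spanS A := hemem'
  have hecomm : ∀ a ∈ spanS A, a * e = e * a := hecomm'
  set E : Matrix Y Y ℂ := eps (pointFiber y₀ t) with hEdef
  have hEE : E * E = E := by rw [hEdef, eps_mul_eps, Finset.inter_self]
  have hfibne : (pointFiber y₀ t).Nonempty := by
    have hc := fiber_card B ht y₀
    rw [h3.2 t ht ht1] at hc
    exact Finset.card_pos.mp (by rw [hc]; norm_num)
  obtain ⟨y₁, hy₁⟩ := hfibne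
  have hEy₁ : E y₁ y₁ = 1 := by
    rw [hEdef, eps, Matrix.diagonal_apply_eq]
    simp [hy₁]
  have hcancel : ∀ M N : Matrix X X ℂ, M ⊗ₖ E = N ⊗ₖ E → M = N := by
    intro M N h
    ext x x'
    have h2 := congrFun (congrFun h (x, y₁)) (x', y₁)
    rw [Matrix.kroneckerMap_apply, Matrix.kroneckerMap_apply, hEy₁, mul_one, mul_one] at h2
    exact h2
  have hy₀not : y₀ ∉ pointFiber y₀ t := by
    intro hz
    rw [pointFiber, Finset.mem_filter] at hz
    exact ht1 (rel_unique B ht B.id_mem hz.2 (mem_diagRel.mpr rfl))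
  have hEy0 : E * eps ({y₀} : Finset Y) = 0 := by
    rw [hEdef, eps_mul_eps]
    have hempty : pointFiber y₀ t ∩ {y₀} = ∅ := by
      rw [Finset.eq_empty_iff_forall_notMem]
      intro z hz
      rw [Finset.mem_inter, Finset.mem_singleton] at hz
      obtain ⟨hz1, rfl⟩ := hz
      exact hy₀not hz1
    rw [hempty, eps_empty]
  have hy0E : eps ({y₀} : Finset Y) * E = 0 := by
    rw [hEdef, eps_mul_eps, Finset.inter_comm, ← eps_mul_eps, ← hEdef, hEy0]
  have hEfib : ∀ t' ∈ B.rels, t' ≠ diagRel Y →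
      ∃ μ : ℂ, E * eps (pointFiber y₀ t') = μ • E := by
    intro t' ht' ht'1
    by_cases hcase : t' = t
    · subst hcase
      exact ⟨1, by rw [← hEdef, hEE, one_smul]⟩
    · refine ⟨0, ?_⟩
      rw [hEdef, eps_mul_eps, zero_smul]
      have hempty : pointFiber y₀ t ∩ pointFiber y₀ t' = ∅ := by
        rw [Finset.eq_empty_iff_forall_notMem]
        intro z hz
        rw [Finset.mem_inter, pointFiber, pointFiber, Finset.mem_filter,
          Finset.mem_filter] at hz
        exact hcase (rel_unique B ht' ht hz.2.2 hz.1.2)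
      rw [hempty, eps_empty]
  have hfibcomm : ∀ U : Finset Y, eps U * E = E * eps U := by
    intro U
    rw [hEdef, eps_mul_eps, eps_mul_eps, Finset.inter_comm]
  -- generator memberships
  have hgen1 : ∀ s ∈ A.rels,
      adjMat s ⊗ₖ (1 : Matrix Y Y ℂ) ∈ wreathTerw A B x₀ y₀ := fun s hs =>
    Algebra.subset_adjoin (Or.inl (Or.inl (Or.inl ⟨s, hs, rfl⟩)))
  have hgen4 : (1 : Matrix X X ℂ) ⊗ₖ E ∈ wreathTerw A B x₀ y₀ :=
    Algebra.subset_adjoin (Or.inr ⟨t, ht, ht1, rfl⟩)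
  -- membership of c
  have hcmem : e ⊗ₖ E ∈ wreathTerw A B x₀ y₀ := by
    have he1 : e ⊗ₖ (1 : Matrix Y Y ℂ) ∈ wreathTerw A B x₀ y₀ := by
      set K1 : Matrix X X ℂ →ₗ[ℂ] Matrix (X × Y) (X × Y) ℂ :=
        { toFun := fun M => M ⊗ₖ (1 : Matrix Y Y ℂ)
          map_add' := fun M N => Matrix.add_kronecker M N 1
          map_smul' := fun cc M => Matrix.smul_kronecker cc M 1 } with hK1
      have hsub : spanS A ≤
          Submodule.comap K1 (wreathTerw A B x₀ y₀).toSubmodule := by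
        rw [spanS, Submodule.span_le]
        rintro M ⟨s, hs, rfl⟩
        exact hgen1 s hs
      exact hsub hemem
    have hsplit : e ⊗ₖ E = (e ⊗ₖ (1 : Matrix Y Y ℂ)) * ((1 : Matrix X X ℂ) ⊗ₖ E) := by
      rw [← Matrix.mul_kronecker_mul, mul_one, one_mul]
    rw [hsplit]
    exact mul_mem he1 hgen4
  -- nonzero
  have hcne : e ⊗ₖ E ≠ 0 := by
    intro h0
    apply hene
    ext x x'
    have h2 := congrFun (congrFun h0 (x, y₁)) (x', y₁)
    rw [Matrix.kroneckerMap_apply, hEy₁, mul_one] at h2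
    exact h2
  -- idempotent
  have hcidem : (e ⊗ₖ E) * (e ⊗ₖ E) = e ⊗ₖ E := by
    rw [← Matrix.mul_kronecker_mul, heid, hEE]
  -- centrality
  have hccomm : ∀ a ∈ wreathTerw A B x₀ y₀, a * (e ⊗ₖ E) = (e ⊗ₖ E) * a := by
    intro a ha
    have ha' : a ∈ Algebra.adjoin ℂ (wreathGens A B x₀ y₀) := ha
    clear ha
    induction ha' using Algebra.adjoin_induction with
    | mem w hw =>
      rcases hw with ((⟨s, hs, rfl⟩ | ⟨s, hs, rfl⟩) | ⟨t', ht', ht'1, rfl⟩) |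
        ⟨t', ht', ht'1, rfl⟩
      · rw [← Matrix.mul_kronecker_mul, ← Matrix.mul_kronecker_mul, one_mul, mul_one,
          hecomm (adjMat s) (adjMat_mem_spanS A hs)]
      · rw [← Matrix.mul_kronecker_mul, ← Matrix.mul_kronecker_mul, hy0E, hEy0,
          Matrix.kronecker_zero, Matrix.kronecker_zero]
      · rw [← Matrix.mul_kronecker_mul, ← Matrix.mul_kronecker_mul, hJe, heJ,
          Matrix.zero_kronecker, Matrix.zero_kronecker]
      · rw [← Matrix.mul_kronecker_mul, ← Matrix.mul_kronecker_mul, one_mul, mul_one,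
          hfibcomm (pointFiber y₀ t')]
    | algebraMap r => rw [Algebra.commutes]
    | add x y hx hy ihx ihy => rw [add_mul, mul_add, ihx, ihy]
    | mul x y hx hy ihx ihy => rw [mul_assoc, ihy, ← mul_assoc, ihx, mul_assoc]
  refine ⟨hcmem, hcne, hcidem, hccomm, ?_⟩
  rintro ⟨f, g, hfT, hgT, hf0, hg0, hff, hgg, hfcm, hgcm, hfg, hgf, hsum⟩
  -- f and g are fixed by the corner
  have hfc1 : f * (e ⊗ₖ E) = f := by rw [hsum, mul_add, hff, hfg, add_zero]
  have hcf1 : (e ⊗ₖ E) * f = f := by rw [hsum, add_mul, hff, hgf, add_zero]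
  have hgc1 : g * (e ⊗ₖ E) = g := by rw [hsum, mul_add, hgf, hgg, zero_add]
  have hcg1 : (e ⊗ₖ E) * g = g := by rw [hsum, add_mul, hfg, hgg, zero_add]
  -- the corner subspace machinery
  set KE : Matrix X X ℂ →ₗ[ℂ] Matrix (X × Y) (X × Y) ℂ :=
    { toFun := fun M => M ⊗ₖ E
      map_add' := fun M N => Matrix.add_kronecker M N E
      map_smul' := fun cc M => Matrix.smul_kronecker cc M E } with hKE
  have hKEapp : ∀ M : Matrix X X ℂ, KE M = M ⊗ₖ E := fun M => rfl
  set Cset : Set (Matrix (X × Y) (X × Y) ℂ) :=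
    {w | ∃ P Q, w = P ⊗ₖ Q ∧
      ((P ∈ spanS A ∧ ∃ μ : ℂ, E * Q = μ • E) ∨ e * P = 0 ∨ E * Q = 0)} with hCset
  have hCmul : ∀ w1 ∈ Cset, ∀ w2 ∈ Cset, w1 * w2 ∈ Cset := by
    rintro w1 ⟨P, Q, rfl, h1⟩ w2 ⟨P', Q', rfl, h2⟩
    refine ⟨P * P', Q * Q', (Matrix.mul_kronecker_mul P P' Q Q').symm, ?_⟩
    rcases h1 with ⟨hP, μ, hQ⟩ | hP | hQ
    · rcases h2 with ⟨hP', μ', hQ'⟩ | hP' | hQ'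
      · exact Or.inl ⟨spanS_mul A hP hP',
          ⟨μ * μ', by rw [← mul_assoc, hQ, smul_mul_assoc, hQ', smul_smul]⟩⟩
      · refine Or.inr (Or.inl ?_)
        rw [← mul_assoc, ← hecomm P hP, mul_assoc, hP', mul_zero]
      · exact Or.inr (Or.inr
          (by rw [← mul_assoc, hQ, smul_mul_assoc, hQ', smul_zero]))
    · exact Or.inr (Or.inl (by rw [← mul_assoc, hP, zero_mul]))
    · exact Or.inr (Or.inr (by rw [← mul_assoc, hQ, zero_mul]))
  have h1C : (1 : Matrix (X × Y) (X × Y) ℂ) ∈ Cset :=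
    ⟨1, 1, (Matrix.one_kronecker_one).symm,
      Or.inl ⟨one_mem_spanS A, ⟨1, by rw [mul_one, one_smul]⟩⟩⟩
  have hWmul : ∀ a ∈ Submodule.span ℂ Cset, ∀ b ∈ Submodule.span ℂ Cset,
      a * b ∈ Submodule.span ℂ Cset := by
    intro a ha b hb
    induction ha using Submodule.span_induction with
    | mem x hx =>
      induction hb using Submodule.span_induction with
      | mem y hy => exact Submodule.subset_span (hCmul x hx y hy)
      | zero => rw [mul_zero]; exact zero_mem _
      | add y z _ _ hy hz => rw [mul_add]; exact add_mem hy hz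
      | smul c y _ hy => rw [mul_smul_comm]; exact Submodule.smul_mem _ _ hy
    | zero => rw [zero_mul]; exact zero_mem _
    | add x y _ _ hx hy => rw [add_mul]; exact add_mem hx hy
    | smul c x _ hx => rw [smul_mul_assoc]; exact Submodule.smul_mem _ _ hx
  have hTW : ∀ w ∈ wreathTerw A B x₀ y₀, w ∈ Submodule.span ℂ Cset := by
    intro w hw
    have hw' : w ∈ Algebra.adjoin ℂ (wreathGens A B x₀ y₀) := hw
    clear hw
    induction hw' using Algebra.adjoin_induction with
    | mem x hx =>
      refine Submodule.subset_span ?_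
      rcases hx with ((⟨s, hs, rfl⟩ | ⟨s, hs, rfl⟩) | ⟨t', ht', ht'1, rfl⟩) |
        ⟨t', ht', ht'1, rfl⟩
      · exact ⟨adjMat s, 1, rfl,
          Or.inl ⟨adjMat_mem_spanS A hs, ⟨1, by rw [mul_one, one_smul]⟩⟩⟩
      · exact ⟨eps (pointFiber x₀ s), eps {y₀}, rfl, Or.inr (Or.inr hEy0)⟩
      · exact ⟨allOnes X, adjMat t', rfl, Or.inr (Or.inl heJ)⟩
      · exact ⟨1, eps (pointFiber y₀ t'), rfl,
          Or.inl ⟨one_mem_spanS A, hEfib t' ht' ht'1⟩⟩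
    | algebraMap r =>
      rw [Algebra.algebraMap_eq_smul_one]
      exact Submodule.smul_mem _ _ (Submodule.subset_span h1C)
    | add x y hx hy ihx ihy => exact add_mem ihx ihy
    | mul x y hx hy ihx ihy => exact hWmul x ihx y ihy
  have hcompress : ∀ w ∈ Submodule.span ℂ Cset,
      (e ⊗ₖ E) * w * (e ⊗ₖ E) ∈ Submodule.map KE (spanS A) := by
    intro w hw
    induction hw using Submodule.span_induction with
    | mem w hw =>
      obtain ⟨P, Q, rfl, hcase⟩ := hw
      have hPQ : (e ⊗ₖ E) * (P ⊗ₖ Q) * (e ⊗ₖ E) = (e * P * e) ⊗ₖ (E * Q * E) := by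
        rw [← Matrix.mul_kronecker_mul, ← Matrix.mul_kronecker_mul]
      rcases hcase with ⟨hP, μ, hQ⟩ | hP | hQ
      · rw [hPQ, hQ, smul_mul_assoc, hEE, Matrix.kronecker_smul, ← Matrix.smul_kronecker]
        exact ⟨μ • (e * P * e),
          Submodule.smul_mem _ _ (spanS_mul A (spanS_mul A hemem hP) hemem), rfl⟩
      · rw [hPQ, hP, zero_mul, Matrix.zero_kronecker]
        exact Submodule.zero_mem _
      · rw [hPQ, hQ, zero_mul, Matrix.kronecker_zero]
        exact Submodule.zero_mem _
    | zero => rw [mul_zero, zero_mul]; exact Submodule.zero_mem _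
    | add x y _ _ ihx ihy => rw [mul_add, add_mul]; exact Submodule.add_mem _ ihx ihy
    | smul a x _ ihx =>
      rw [mul_smul_comm, smul_mul_assoc]; exact Submodule.smul_mem _ _ ihx
  -- extract the X-side components
  have hfW := hcompress f (hTW f hfT)
  have hgW := hcompress g (hTW g hgT)
  rw [hcf1, hfc1] at hfW
  rw [hcg1, hgc1] at hgW
  obtain ⟨M, hM, hMf⟩ := hfW
  obtain ⟨N, hN, hNg⟩ := hgW
  rw [hKEapp] at hMf hNg
  -- derived identities
  have hMN_add : M + N = e := by
    apply hcancel
    rw [Matrix.add_kronecker, hMf, hNg, ← hsum]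
  have hMM : M * M = M := by
    apply hcancel
    rw [← hEE, Matrix.mul_kronecker_mul, hEE, hMf, hff]
  have hNN : N * N = N := by
    apply hcancel
    rw [← hEE, Matrix.mul_kronecker_mul, hEE, hNg, hgg]
  have hMN : M * N = 0 := by
    apply hcancel
    rw [Matrix.zero_kronecker, ← hEE, Matrix.mul_kronecker_mul, hMf, hNg, hfg]
  have hNM : N * M = 0 := by
    apply hcancel
    rw [Matrix.zero_kronecker, ← hEE, Matrix.mul_kronecker_mul, hMf, hNg, hgf]
  have hM0 : M ≠ 0 := by
    intro h
    apply hf0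
    rw [← hMf, h, Matrix.zero_kronecker]
  have hN0 : N ≠ 0 := by
    intro h
    apply hg0
    rw [← hNg, h, Matrix.zero_kronecker]
  have hMsig : ∀ s ∈ A.rels, adjMat s * M = M * adjMat s := by
    intro s hs
    apply hcancel
    have h := hfcm (adjMat s ⊗ₖ (1 : Matrix Y Y ℂ)) (hgen1 s hs)
    rw [← hMf, ← Matrix.mul_kronecker_mul, ← Matrix.mul_kronecker_mul,
      one_mul, mul_one] at h
    exact h
  have hNsig : ∀ s ∈ A.rels, adjMat s * N = N * adjMat s := by
    intro s hs
    apply hcancel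
    have h := hgcm (adjMat s ⊗ₖ (1 : Matrix Y Y ℂ)) (hgen1 s hs)
    rw [← hNg, ← Matrix.mul_kronecker_mul, ← Matrix.mul_kronecker_mul,
      one_mul, mul_one] at h
    exact h
  have hMcomm : ∀ a ∈ spanS A, a * M = M * a := by
    intro a ha
    induction ha using Submodule.span_induction with
    | mem x hx => obtain ⟨s, hs, rfl⟩ := hx; exact hMsig s hs
    | zero => rw [zero_mul, mul_zero]
    | add x y _ _ hx hy => rw [add_mul, mul_add, hx, hy]
    | smul c x _ hx => rw [smul_mul_assoc, mul_smul_comm, hx]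
  have hNcomm : ∀ a ∈ spanS A, a * N = N * a := by
    intro a ha
    induction ha using Submodule.span_induction with
    | mem x hx => obtain ⟨s, hs, rfl⟩ := hx; exact hNsig s hs
    | zero => rw [zero_mul, mul_zero]
    | add x y _ _ hx hy => rw [add_mul, mul_add, hx, hy]
    | smul c x _ hx => rw [smul_mul_assoc, mul_smul_comm, hx]
  exact heprim ⟨M, N, hM, hN, hM0, hN0, hMM, hNN, hMcomm, hNcomm, hMN, hNM, hMN_add.symm⟩

end Statements
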